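/- Let w be a group word and G a group such that the set of w-values in G is finite with at most m elements. Then the order of the commutator subgroup w(G)' of the verbal subgroup w(G) is bounded by a function of m (and w). -/

import Mathlib

/-- The set of `w`-values of a group word `w` (an element of a free group) in a group `G`:
elements of the form `w(g_1, ..., g_k)`. -/
def wordValues {α : Type*} (w : FreeGroup α) (G : Type*) [Group G] : Set G :=
  {g : G | ∃ f : α → G, FreeGroup.lift f w = g}

/-- The verbal subgroup `w(G)`: the subgroup generated by all `w`-values. -/
def verbalSubgroup {α : Type*} (w : FreeGroup α) (G : Type*) [Group G] : Subgroup G :=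
  Subgroup.closure (wordValues w G)

open Subgroup
open scoped commutatorElement

section Aux
variable {G : Type*} [Group G]

/-- conjugation permutation on a conjugation-invariant set -/
noncomputable def conjPermHom (X : Set G) (hc : ∀ g : G, ∀ x ∈ X, g * x * g⁻¹ ∈ X) :
    G →* Equiv.Perm X where
  toFun g :=
    { toFun := fun x => ⟨g * x * g⁻¹, hc g x x.2⟩
      invFun := fun x => ⟨g⁻¹ * x * g, by simpa using hc g⁻¹ x x.2⟩
      left_inv := fun x => by ext; simp; group
      right_inv := fun x => by ext; simp; group }
  map_one' := by ext x; simp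
  map_mul' g h := by ext x; simp [mul_assoc]

lemma comm_left_center {K : Type*} [Group K] (a b z : K) (hz : z ∈ Subgroup.center K) :
    ⁅a * z, b⁆ = ⁅a, b⁆ := by
  have hzc := Subgroup.mem_center_iff.mp hz
  have hb : z * b * z⁻¹ = b := by rw [← hzc b]; group
  simp only [commutatorElement_def, mul_inv_rev]
  nth_rewrite 3 [← hb]
  group

lemma comm_right_center {K : Type*} [Group K] (a b z : K) (hz : z ∈ Subgroup.center K) :
    ⁅a, b * z⁆ = ⁅a, b⁆ := by
  have hzc := Subgroup.mem_center_iff.mp hz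
  have ha : z * a⁻¹ * z⁻¹ = a⁻¹ := by rw [← hzc a⁻¹]; group
  simp only [commutatorElement_def, mul_inv_rev]
  nth_rewrite 2 [← ha]
  group

theorem key (X : Set G) (hX : X.Finite) (hc : ∀ g : G, ∀ x ∈ X, g * x * g⁻¹ ∈ X) :
    Finite ↥(⁅closure X, closure X⁆ : Subgroup G) ∧
      ∃ n ≤ Nat.factorial (Nat.card X) ^ 2,
        Nat.card ↥(⁅closure X, closure X⁆ : Subgroup G) ≤ cardCommutatorBound n := by
  classical
  have : Finite X := hX
  set H := closure X with hH
  set ψ : ↥H →* Equiv.Perm X := (conjPermHom X hc).comp H.subtype with hψ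
  -- kernel of ψ is central in H
  have hker : ψ.ker ≤ Subgroup.center ↥H := by
    intro g hg
    rw [Subgroup.mem_center_iff]
    intro h
    have hcomm : ∀ x ∈ X, (g : G) * x = x * (g : G) := by
      intro x hx
      have := congrArg (fun e => (e ⟨x, hx⟩ : G)) (hg : ψ g = 1)
      simp [hψ, conjPermHom] at this
      rw [mul_inv_eq_iff_eq_mul] at this
      exact this
    have : (h : G) ∈ Subgroup.centralizer {(g : G)} := by
      have hle : H ≤ Subgroup.centralizer {(g : G)} := by
        apply (closure_le _).mpr
        intro x hx
        rw [SetLike.mem_coe, Subgroup.mem_centralizer_iff]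
        intro y hy
        rcases hy with rfl
        exact hcomm x hx
      exact hle h.2
    have := Subgroup.mem_centralizer_iff.mp this (g : G) rfl
    ext
    simpa using this.symm
  -- the quotient by the kernel is finite of order ≤ (card X)!
  haveI := hX.fintype
  haveI : Finite (↥H ⧸ ψ.ker) :=
    Finite.of_equiv _ (QuotientGroup.quotientKerEquivRange ψ).symm.toEquiv
  have hcardQ : Nat.card (↥H ⧸ ψ.ker) ≤ Nat.factorial (Nat.card X) := by
    rw [Nat.card_congr (QuotientGroup.quotientKerEquivRange ψ).toEquiv]
    calc Nat.card ψ.range ≤ Nat.card (Equiv.Perm X) :=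
          Nat.card_le_card_of_injective _ Subtype.val_injective
      _ = Nat.factorial (Nat.card X) := by
          simp [Nat.card_eq_fintype_card, Fintype.card_perm]
  -- commutators only depend on cosets of the kernel
  have keycomm : ∀ a b : ↥H,
      ⁅(QuotientGroup.mk a : ↥H ⧸ ψ.ker).out, (QuotientGroup.mk b : ↥H ⧸ ψ.ker).out⁆
        = ⁅a, b⁆ := by
    intro a b
    set a' := (QuotientGroup.mk a : ↥H ⧸ ψ.ker).out with ha'
    set b' := (QuotientGroup.mk b : ↥H ⧸ ψ.ker).out with hb'
    have hma : a'⁻¹ * a ∈ Subgroup.center ↥H := by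
      apply hker
      apply QuotientGroup.eq.mp
      rw [ha']
      exact QuotientGroup.out_eq' _
    have hmb : b'⁻¹ * b ∈ Subgroup.center ↥H := by
      apply hker
      apply QuotientGroup.eq.mp
      rw [hb']
      exact QuotientGroup.out_eq' _
    symm
    have ha2 : a = a' * (a'⁻¹ * a) := by group
    have hb2 : b = b' * (b'⁻¹ * b) := by group
    rw [ha2, hb2, comm_left_center _ _ _ hma, comm_right_center _ _ _ hmb]
  -- surjection onto the commutator set
  have hsurj : Function.Surjective
      (fun p : (↥H ⧸ ψ.ker) × (↥H ⧸ ψ.ker) =>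
        (⟨⁅(p.1.out : ↥H), (p.2.out : ↥H)⁆, commutator_mem_commutatorSet _ _⟩ :
          commutatorSet ↥H)) := by
    rintro ⟨c, a, b, rfl⟩
    exact ⟨(QuotientGroup.mk a, QuotientGroup.mk b), Subtype.ext (keycomm a b)⟩
  haveI hfinCS : Finite (commutatorSet ↥H) := Finite.of_surjective _ hsurj
  have hcardCS : Nat.card (commutatorSet ↥H) ≤ Nat.factorial (Nat.card X) ^ 2 := by
    refine (Nat.card_le_card_of_surjective _ hsurj).trans ?_
    rw [Nat.card_prod, sq]
    exact Nat.mul_le_mul hcardQ hcardQ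
  -- Schur's theorem
  haveI : Finite (_root_.commutator ↥H) := inferInstance
  have hbound := Subgroup.card_commutator_le_of_finite_commutatorSet (G := ↥H)
  -- transfer to ⁅H, H⁆ in G
  have hmap : Subgroup.map H.subtype (_root_.commutator ↥H) = ⁅H, H⁆ := by
    rw [_root_.commutator_def, Subgroup.map_commutator, ← MonoidHom.range_eq_map,
      Subgroup.range_subtype]
  have hequiv : Nat.card ↥(⁅H, H⁆ : Subgroup G) = Nat.card (_root_.commutator ↥H) := by
    rw [← hmap]
    exact (Nat.card_congr
      (Subgroup.equivMapOfInjective _ H.subtype (subtype_injective H)).toEquiv).symm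
  have hfin : Finite ↥(⁅H, H⁆ : Subgroup G) := by
    rw [← hmap]
    exact Finite.of_equiv _
      (Subgroup.equivMapOfInjective _ H.subtype (subtype_injective H)).toEquiv
  exact ⟨hfin, Nat.card (commutatorSet ↥H), hcardCS, by rw [hequiv]; exact hbound⟩

end Aux

lemma wordValues_conj {α G : Type*} [Group G] (w : FreeGroup α) (g : G) {x : G}
    (hx : x ∈ wordValues w G) : g * x * g⁻¹ ∈ wordValues w G := by
  obtain ⟨f, hf⟩ := hx
  refine ⟨fun a => g * f a * g⁻¹, ?_⟩
  have h := FreeGroup.lift_unique (f := fun a => g * f a * g⁻¹)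
      (((MulAut.conj g).toMonoidHom).comp (FreeGroup.lift f))
      (by intro a; simp) (x := w)
  rw [← h]
  simp [hf]

/-- If a word `w` takes only finitely many, at most `m`, values in a group `G`,
then the order of the commutator subgroup `w(G)'` of the verbal subgroup is bounded by a
function of `m` (and `w`). -/
theorem stmt0 {α : Type*} (w : FreeGroup α) :
    ∃ f : ℕ → ℕ, ∀ (m : ℕ) (G : Type*) [Group G],
      (wordValues w G).Finite → Nat.card (wordValues w G) ≤ m →
      Finite ↥(⁅verbalSubgroup w G, verbalSubgroup w G⁆ : Subgroup G) ∧
        Nat.card ↥(⁅verbalSubgroup w G, verbalSubgroup w G⁆ : Subgroup G) ≤ f m := by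
  refine ⟨fun m => (Finset.range (Nat.factorial m ^ 2 + 1)).sup Subgroup.cardCommutatorBound,
    fun m G _ hXfin hXcard => ?_⟩
  obtain ⟨hfin, n, hn, hcard⟩ := key (wordValues w G) hXfin
    (fun g x hx => wordValues_conj w g hx)
  refine ⟨hfin, hcard.trans (Finset.le_sup (Finset.mem_range.mpr ?_))⟩
  have h1 : Nat.factorial (Nat.card (wordValues w G)) ≤ Nat.factorial m :=
    Nat.factorial_le hXcard
  have : n ≤ Nat.factorial m ^ 2 := hn.trans (Nat.pow_le_pow_left h1 2)
  omega
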